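/- arXiv:0806.3033 — 2 statements merged into one kernel-verified Lean document; each statement's English description precedes it below -/
import Mathlib

section
/- The set of losing paths for conjunctive compound Node-Kayles on paths under normal play is exactly {P_0, P_4, P_5, P_9, P_10}; i.e., the second player wins on P_n if and only if n ∈ {0, 4, 5, 9, 10}. -/
/-- The options of a single path `P n` in Node-Kayles, each given as a multiset of
resulting path lengths.  A resulting empty path is recorded as `0`, which marks an
ended component.  `P 1` and `P 2` only move to the (ended) empty path. -/
def pathOptions (n : ℕ) : Set (Multiset ℕ) :=
  if n = 0 then ∅
  else if n ≤ 2 then {({0} : Multiset ℕ)}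
  else {({n - 2} : Multiset ℕ), ({n - 3} : Multiset ℕ)} ∪
    {m | ∃ i j : ℕ, 1 ≤ i ∧ i ≤ j ∧ i + j = n - 3 ∧ m = ({i, j} : Multiset ℕ)}

/-- A conjunctive move: play one Node-Kayles move simultaneously in every component. -/
inductive ConjMove : Multiset ℕ → Multiset ℕ → Prop
  | single {n : ℕ} {h : Multiset ℕ} : h ∈ pathOptions n → ConjMove {n} h
  | cons {n : ℕ} {h G H : Multiset ℕ} :
      h ∈ pathOptions n → ConjMove G H → ConjMove (n ::ₘ G) (h + H)

/-- A position is ended (for the short ending rule) when it is empty or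
some component has ended. -/
def Ended (G : Multiset ℕ) : Prop := G = 0 ∨ 0 ∈ G


lemma pathOptions_pos {n : ℕ} (hn : 4 ≤ n) {h : Multiset ℕ} (hh : h ∈ pathOptions n) :
    ∀ y ∈ h, 1 ≤ y := by
  have h0 : ¬ n = 0 := by omega
  have h2 : ¬ n ≤ 2 := by omega
  rw [pathOptions, if_neg h0, if_neg h2] at hh
  rcases hh with (rfl | rfl) | ⟨i, j, hi, hij, hsum, rfl⟩ <;> intro y hy <;>
    simp [Multiset.mem_singleton, Multiset.mem_cons] at hy <;> omega

lemma pathOptions_ne_zero {n : ℕ} {h : Multiset ℕ} (hh : h ∈ pathOptions n) : h ≠ 0 := by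
  rw [pathOptions] at hh
  split_ifs at hh with h0 h2
  · exact absurd hh (Set.notMem_empty _)
  · simp only [Set.mem_singleton_iff] at hh; subst hh; simp
  · rcases hh with (rfl | rfl) | ⟨i, j, _, _, _, rfl⟩ <;> simp

lemma exists_option {n : ℕ} (hn : 1 ≤ n) : ∃ h, h ∈ pathOptions n := by
  by_cases h2 : n ≤ 2
  · exact ⟨{0}, by rw [pathOptions, if_neg (by omega), if_pos h2]; rfl⟩
  · exact ⟨{n-2}, by rw [pathOptions, if_neg (by omega), if_neg h2]; left; left; rfl⟩

lemma zero_mem_pathOptions {n : ℕ} (h1 : 1 ≤ n) (h3 : n ≤ 3) :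
    ({0} : Multiset ℕ) ∈ pathOptions n := by
  by_cases h2 : n ≤ 2
  · rw [pathOptions, if_neg (by omega), if_pos h2]; rfl
  · have : n = 3 := by omega
    subst this
    rw [pathOptions, if_neg (by omega), if_neg h2]
    left; right; rfl

lemma ConjMove.src_ne_zero {G H : Multiset ℕ} (m : ConjMove G H) : G ≠ 0 := by
  cases m <;> simp

lemma ConjMove.tgt_ne_zero {G H : Multiset ℕ} (m : ConjMove G H) : H ≠ 0 := by
  cases m with
  | single hh => exact pathOptions_ne_zero hh
  | @cons n h G' H' hh m' =>
    intro e
    have : h ≤ (0 : Multiset ℕ) := e ▸ Multiset.le_add_right h H'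
    exact pathOptions_ne_zero hh (Multiset.le_zero.mp this)

lemma exists_move : ∀ (G : Multiset ℕ), G ≠ 0 → (∀ y ∈ G, 1 ≤ y) → ∃ H, ConjMove G H := by
  intro G
  induction G using Multiset.induction with
  | empty => intro h; exact absurd rfl h
  | cons a s ih =>
    intro _ hpos
    obtain ⟨h, hh⟩ := exists_option (hpos a (Multiset.mem_cons_self a s))
    by_cases hs : s = 0
    · subst hs; exact ⟨h, ConjMove.single hh⟩
    · obtain ⟨H, hH⟩ := ih hs (fun y hy => hpos y (Multiset.mem_cons_of_mem hy))
      exact ⟨h + H, ConjMove.cons hh hH⟩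

lemma move_mem {G H : Multiset ℕ} (m : ConjMove G H) :
    ∀ y ∈ H, ∃ n ∈ G, ∃ h ∈ pathOptions n, y ∈ h := by
  induction m with
  | single hh => exact fun y hy => ⟨_, Multiset.mem_singleton_self _, _, hh, hy⟩
  | cons hh m' ih =>
    intro y hy
    rw [Multiset.mem_add] at hy
    rcases hy with hy | hy
    · exact ⟨_, Multiset.mem_cons_self _ _, _, hh, hy⟩
    · obtain ⟨n, hn, h, hho, hyh⟩ := ih y hy
      exact ⟨n, Multiset.mem_cons_of_mem hn, h, hho, hyh⟩

lemma move_head {G H : Multiset ℕ} (m : ConjMove G H) :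
    ∀ n ∈ G, ∃ h ∈ pathOptions n, h ≤ H := by
  induction m with
  | single hh =>
    intro n hn
    rw [Multiset.mem_singleton] at hn; subst hn
    exact ⟨_, hh, le_refl _⟩
  | cons hh m' ih =>
    intro n hn
    rw [Multiset.mem_cons] at hn
    rcases hn with rfl | hn
    · exact ⟨_, hh, Multiset.le_add_right _ _⟩
    · obtain ⟨h, hho, hle⟩ := ih n hn
      exact ⟨h, hho, le_trans hle (Multiset.le_add_left _ _)⟩

lemma conj_singleton_aux {G H : Multiset ℕ} (m : ConjMove G H) :
    ∀ n : ℕ, G = {n} → H ∈ pathOptions n := by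
  cases m with
  | single hh =>
    intro n he
    rw [Multiset.singleton_inj] at he
    subst he; exact hh
  | cons hh m' =>
    intro n he
    exfalso
    have hc := congrArg Multiset.card he
    simp at hc
    exact m'.src_ne_zero hc

lemma conj_singleton {n : ℕ} {H : Multiset ℕ} (m : ConjMove {n} H) : H ∈ pathOptions n :=
  conj_singleton_aux m n rfl

section
variable {R : Multiset ℕ → ℕ}
  (hend : ∀ G, Ended G → R G = 0)
  (heven : ∀ G, ¬ Ended G → (∃ H, ConjMove G H ∧ Even (R H)) →
    R G = 1 + sInf {r | Even r ∧ ∃ H, ConjMove G H ∧ R H = r})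
  (hodd : ∀ G, ¬ Ended G → ¬ (∃ H, ConjMove G H ∧ Even (R H)) →
    R G = 1 + sSup {r | Odd r ∧ ∃ H, ConjMove G H ∧ R H = r})

lemma not_ended {G : Multiset ℕ} (hG : G ≠ 0) (hpos : ∀ y ∈ G, 1 ≤ y) : ¬ Ended G := by
  rintro (rfl | h0)
  · exact hG rfl
  · exact absurd (hpos 0 h0) (by omega)

include hend heven in
/-- Lemma A : a nonempty all-positive position with a component ≤ 3 has remoteness 1. -/
lemma RA {G : Multiset ℕ} (hG : G ≠ 0) (hpos : ∀ y ∈ G, 1 ≤ y)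
    {x : ℕ} (hx : x ∈ G) (hx3 : x ≤ 3) : R G = 1 := by
  have hne := not_ended hG hpos
  -- construct a move to an ended position
  have hx1 : 1 ≤ x := hpos x hx
  have h0opt : ({0} : Multiset ℕ) ∈ pathOptions x := zero_mem_pathOptions hx1 hx3
  obtain ⟨H, hH, hHend⟩ : ∃ H, ConjMove G H ∧ Ended H := by
    by_cases hs : G.erase x = 0
    · have : G = {x} := by
        have := Multiset.cons_erase hx
        rw [hs] at this
        exact this.symm
      subst this
      exact ⟨{0}, ConjMove.single h0opt, Or.inr (Multiset.mem_singleton_self 0)⟩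
    · obtain ⟨H', hH'⟩ := exists_move (G.erase x) hs
        (fun y hy => hpos y (Multiset.mem_of_mem_erase hy))
      refine ⟨{0} + H', ?_, Or.inr (by simp)⟩
      have : ConjMove (x ::ₘ G.erase x) ({0} + H') := ConjMove.cons h0opt hH'
      rwa [Multiset.cons_erase hx] at this
  have hH0 : R H = 0 := hend H hHend
  rw [heven G hne ⟨H, hH, hH0 ▸ Even.zero⟩]
  have h0mem : 0 ∈ {r | Even r ∧ ∃ H, ConjMove G H ∧ R H = r} := ⟨Even.zero, H, hH, hH0⟩
  rw [Nat.sInf_eq_zero.mpr (Or.inl h0mem)]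

include heven hodd in
/-- Lemma C : a non-ended position has remoteness ≥ 1. -/
lemma RC {G : Multiset ℕ} (hne : ¬ Ended G) : 1 ≤ R G := by
  by_cases h : ∃ H, ConjMove G H ∧ Even (R H)
  · rw [heven G hne h]; omega
  · rw [hodd G hne h]; omega

include hodd in
/-- Lemma E : if all options have remoteness 1 and there is an option, remoteness is 2. -/
lemma RE {G : Multiset ℕ} (hne : ¬ Ended G)
    (hall : ∀ H, ConjMove G H → R H = 1) (hex : ∃ H, ConjMove G H) : R G = 2 := by
  have hno : ¬ ∃ H, ConjMove G H ∧ Even (R H) := by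
    rintro ⟨H, hH, hev⟩
    rw [hall H hH] at hev
    exact (Nat.not_even_iff_odd.mpr odd_one) hev
  rw [hodd G hne hno]
  have : {r | Odd r ∧ ∃ H, ConjMove G H ∧ R H = r} = {1} := by
    ext r
    simp only [Set.mem_setOf_eq, Set.mem_singleton_iff]
    constructor
    · rintro ⟨_, H, hH, rfl⟩; exact hall H hH
    · rintro rfl
      obtain ⟨H, hH⟩ := hex
      exact ⟨odd_one, H, hH, hall H hH⟩
  rw [this, csSup_singleton]

include heven in
/-- Lemma D : if some option has remoteness 2 and all options have remoteness ≥ 1,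
then remoteness is 3. -/
lemma RD {G : Multiset ℕ} (hne : ¬ Ended G)
    (hex : ∃ H, ConjMove G H ∧ R H = 2) (hall : ∀ H, ConjMove G H → 1 ≤ R H) :
    R G = 3 := by
  obtain ⟨H2, hH2, hR2⟩ := hex
  rw [heven G hne ⟨H2, hH2, hR2 ▸ (by norm_num)⟩]
  set S := {r | Even r ∧ ∃ H, ConjMove G H ∧ R H = r} with hS
  have h2 : 2 ∈ S := ⟨by norm_num, H2, hH2, hR2⟩
  have : sInf S = 2 := by
    have hle : sInf S ≤ 2 := Nat.sInf_le h2
    obtain ⟨hev, H, hH, hRH⟩ := Nat.sInf_mem (⟨2, h2⟩ : S.Nonempty)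
    have h1 := hall H hH
    rw [Nat.even_iff] at hev
    omega
  rw [this]

include hodd in
/-- Lemma F : if all options have remoteness 1 or 3, and some has 3, remoteness is 4. -/
lemma RF {G : Multiset ℕ} (hne : ¬ Ended G)
    (hall : ∀ H, ConjMove G H → R H = 1 ∨ R H = 3)
    (hex : ∃ H, ConjMove G H ∧ R H = 3) : R G = 4 := by
  have hno : ¬ ∃ H, ConjMove G H ∧ Even (R H) := by
    rintro ⟨H, hH, hev⟩
    rcases hall H hH with h | h <;> rw [h] at hev <;> exact absurd hev (by decide)
  rw [hodd G hne hno]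
  set S := {r | Odd r ∧ ∃ H, ConjMove G H ∧ R H = r} with hS
  obtain ⟨H3, hH3, hR3⟩ := hex
  have h3 : 3 ∈ S := ⟨by decide, H3, hH3, hR3⟩
  have hbdd : ∀ r ∈ S, r ≤ 3 := by
    rintro r ⟨_, H, hH, rfl⟩
    rcases hall H hH with h | h <;> omega
  have : sSup S = 3 := le_antisymm (csSup_le ⟨3, h3⟩ hbdd) (le_csSup ⟨3, hbdd⟩ h3)
  rw [this]

include hend heven hodd in
/-- Lemma B : R {4, m} = 2 for m ≥ 4. -/
lemma RB {m : ℕ} (hm : 4 ≤ m) : R (4 ::ₘ {m}) = 2 := by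
  have hGne : (4 ::ₘ {m} : Multiset ℕ) ≠ 0 := by simp
  have hGpos : ∀ y ∈ (4 ::ₘ {m} : Multiset ℕ), 1 ≤ y := by
    intro y hy; rw [Multiset.mem_cons, Multiset.mem_singleton] at hy; omega
  have hne := not_ended hGne hGpos
  have hall : ∀ H, ConjMove (4 ::ₘ {m}) H → R H = 1 := by
    intro H hH
    have hpos : ∀ y ∈ H, 1 ≤ y := by
      intro y hy
      obtain ⟨n, hn, h, hho, hyh⟩ := move_mem hH y hy
      have h4 : 4 ≤ n := by
        rw [Multiset.mem_cons, Multiset.mem_singleton] at hn; omega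
      exact pathOptions_pos h4 hho y hyh
    obtain ⟨h, hho, hle⟩ := move_head hH 4 (Multiset.mem_cons_self _ _)
    rw [pathOptions, if_neg (by norm_num), if_neg (by norm_num)] at hho
    simp only [Set.mem_union, Set.mem_insert_iff, Set.mem_singleton_iff,
      Set.mem_setOf_eq] at hho
    have hsmall : ∃ x ∈ H, x ≤ 3 := by
      rcases hho with (rfl | rfl) | ⟨i, j, hi, hij, hs, rfl⟩
      · exact ⟨2, Multiset.mem_of_le hle (Multiset.mem_singleton_self _), by norm_num⟩
      · exact ⟨1, Multiset.mem_of_le hle (Multiset.mem_singleton_self _), by norm_num⟩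
      · omega
    obtain ⟨x, hxH, hx3⟩ := hsmall
    exact RA hend heven (hH.tgt_ne_zero) hpos hxH hx3
  refine RE hodd hne hall ?_
  obtain ⟨H', hH'⟩ := exists_move {m} (by simp) (by intro y hy; rw [Multiset.mem_singleton] at hy; omega)
  obtain ⟨h, hh⟩ := exists_option (show 1 ≤ 4 by norm_num)
  exact ⟨h + H', ConjMove.cons hh hH'⟩

lemma conj_singleton_iff {n : ℕ} (hn : 3 ≤ n) {H : Multiset ℕ} :
    ConjMove {n} H ↔ (H = {n-2} ∨ H = {n-3} ∨
      ∃ i j : ℕ, 1 ≤ i ∧ i ≤ j ∧ i + j = n - 3 ∧ H = ({i, j} : Multiset ℕ)) := by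
  have h0 : ¬ n = 0 := by omega
  have h2 : ¬ n ≤ 2 := by omega
  constructor
  · intro m
    have hm := conj_singleton m
    rw [pathOptions, if_neg h0, if_neg h2] at hm
    simpa only [Set.mem_union, Set.mem_insert_iff, Set.mem_singleton_iff,
      Set.mem_setOf_eq, or_assoc] using hm
  · intro h
    apply ConjMove.single
    rw [pathOptions, if_neg h0, if_neg h2]
    simpa only [Set.mem_union, Set.mem_insert_iff, Set.mem_singleton_iff,
      Set.mem_setOf_eq, or_assoc] using h

include hend heven in
lemma Rsing1 {a : ℕ} (h1 : 1 ≤ a) (h3 : a ≤ 3) : R {a} = 1 :=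
  RA hend heven (by simp) (by intro y hy; rw [Multiset.mem_singleton] at hy; omega)
    (Multiset.mem_singleton_self a) h3

include hend heven in
lemma Rpair1 {i j : ℕ} (h1 : 1 ≤ i) (h3 : i ≤ 3) (hj : 1 ≤ j) : R ({i, j} : Multiset ℕ) = 1 :=
  RA hend heven (by simp)
    (by intro y hy; rw [Multiset.insert_eq_cons, Multiset.mem_cons, Multiset.mem_singleton] at hy; omega)
    (by rw [Multiset.insert_eq_cons]; exact Multiset.mem_cons_self i _) h3

include hend heven hodd in
lemma Rsingle : ∀ n : ℕ,
    R {n} = if n = 0 then 0 else if n ≤ 3 then 1 else if n ≤ 5 then 2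
      else if n ≤ 8 then 3 else if n ≤ 10 then 4 else 3 := by
  intro n
  induction n using Nat.strong_induction_on with
  | _ n ih =>
  by_cases h0 : n = 0
  · subst h0
    rw [hend {0} (Or.inr (Multiset.mem_singleton_self 0))]
    split_ifs <;> omega
  by_cases h3 : n ≤ 3
  · rw [Rsing1 hend heven (by omega) h3]
    split_ifs <;> omega
  have h4 : 4 ≤ n := by omega
  have hne : ¬ Ended {n} := not_ended (by simp)
    (by intro y hy; rw [Multiset.mem_singleton] at hy; omega)
  have hge1 : ∀ H, ConjMove {n} H → 1 ≤ R H := by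
    intro H hH
    have hm := conj_singleton hH
    exact RC heven hodd (not_ended (pathOptions_ne_zero hm) (pathOptions_pos h4 hm))
  have hopt := fun (H : Multiset ℕ) => (conj_singleton_iff (show 3 ≤ n by omega) (H := H))
  by_cases h5 : n ≤ 5
  · have hv : R {n} = 2 := by
      refine RE hodd hne ?_ ⟨{n-2}, (hopt _).mpr (Or.inl rfl)⟩
      intro H hH
      rcases (hopt H).mp hH with rfl | rfl | ⟨i, j, hi, hij, hs, rfl⟩
      · exact Rsing1 hend heven (by omega) (by omega)
      · exact Rsing1 hend heven (by omega) (by omega)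
      · exact Rpair1 hend heven hi (by omega) (by omega)
    rw [hv]; split_ifs <;> omega
  by_cases h8 : n ≤ 8
  · have hv : R {n} = 3 := by
      refine RD heven hne ?_ hge1
      by_cases h7 : n ≤ 7
      · refine ⟨{n-2}, (hopt _).mpr (Or.inl rfl), ?_⟩
        rw [ih (n-2) (by omega)]
        split_ifs <;> omega
      · refine ⟨{n-3}, (hopt _).mpr (Or.inr (Or.inl rfl)), ?_⟩
        rw [ih (n-3) (by omega)]
        split_ifs <;> omega
    rw [hv]; split_ifs <;> omega
  by_cases h10 : n ≤ 10
  · have hv : R {n} = 4 := by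
      refine RF hodd hne ?_ ?_
      · intro H hH
        rcases (hopt H).mp hH with rfl | rfl | ⟨i, j, hi, hij, hs, rfl⟩
        · right; rw [ih (n-2) (by omega)]; split_ifs <;> omega
        · right; rw [ih (n-3) (by omega)]; split_ifs <;> omega
        · left; exact Rpair1 hend heven hi (by omega) (by omega)
      · refine ⟨{n-2}, (hopt _).mpr (Or.inl rfl), ?_⟩
        rw [ih (n-2) (by omega)]
        split_ifs <;> omega
    rw [hv]; split_ifs <;> omega
  · have hv : R {n} = 3 := by
      refine RD heven hne ⟨({4, n-7} : Multiset ℕ), (hopt _).mpr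
        (Or.inr (Or.inr ⟨4, n-7, by omega, by omega, by omega, rfl⟩)), ?_⟩ hge1
      rw [Multiset.insert_eq_cons]
      exact RB hend heven hodd (by omega)
    rw [hv]; split_ifs <;> omega

end

theorem conjunctive_losing_paths_normal (R : Multiset ℕ → ℕ)
    (hend : ∀ G, Ended G → R G = 0)
    (heven : ∀ G, ¬ Ended G → (∃ H, ConjMove G H ∧ Even (R H)) →
      R G = 1 + sInf {r | Even r ∧ ∃ H, ConjMove G H ∧ R H = r})
    (hodd : ∀ G, ¬ Ended G → ¬ (∃ H, ConjMove G H ∧ Even (R H)) →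
      R G = 1 + sSup {r | Odd r ∧ ∃ H, ConjMove G H ∧ R H = r}) :
    ∀ n : ℕ, Even (R {n}) ↔ n ∈ ({0, 4, 5, 9, 10} : Set ℕ) := by
  intro n
  rw [Rsingle hend heven hodd n]
  simp only [Set.mem_insert_iff, Set.mem_singleton_iff]
  split_ifs <;> simp [Nat.even_iff] <;> omega
end

section
/- Let S⁻ be the misère suspense number for continued conjunctive compound Node-Kayles on paths: S⁻(empty)=0; S⁻(G) = 1 + max{odd suspense numbers of options} if some option has odd suspense number, otherwise 1 + min{even suspense numbers of options}; and S⁻(P_i ∪ P_j) = max(S⁻(P_i), S⁻(P_j)). Then S⁻ is increasing on paths and for every n ≥ 0: S⁻(P_{7·2^n − 6}) = S⁻(P_{7·2^n − 5}) = 2n+1, and S⁻(P_k) = 2n+2 for every k with 7·2^n − 4 ≤ k ≤ 7·2^{n+1} − 7. -/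
/-- The values, under a valuation `f` of paths (with `f 0` the value of the empty
position), of the options of the path `P n` in Node-Kayles, where the value of a
disjoint union `P i ∪ P j` is `max (f i) (f j)`.  For `n = 1, 2` the only option
is the empty position; for `n ≥ 3` the options are `P (n-2)`, `P (n-3)` and the
unions `P i ∪ P j` with `j ≥ i ≥ 1`, `i + j = n - 3`. -/
def optValues (f : ℕ → ℕ) (n : ℕ) : Set ℕ :=
  if n ≤ 2 then {f 0}
  else {f (n - 2), f (n - 3)} ∪
    {v | ∃ i j : ℕ, 1 ≤ i ∧ i ≤ j ∧ i + j = n - 3 ∧ v = max (f i) (f j)}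

/-- The explicit formula for the misère suspense number of `P n`. -/
def T (n : ℕ) : ℕ :=
  if n = 0 then 0 else
    if n ≤ 7 * 2 ^ (Nat.log 2 ((n + 6) / 7)) - 5
      then 2 * Nat.log 2 ((n + 6) / 7) + 1
      else 2 * Nat.log 2 ((n + 6) / 7) + 2

lemma Tlog {m n : ℕ} (h1 : 7 * 2 ^ m - 6 ≤ n) (h2 : n ≤ 7 * 2 ^ (m + 1) - 7) :
    Nat.log 2 ((n + 6) / 7) = m := by
  have hp : 1 ≤ 2 ^ m := Nat.one_le_two_pow
  have hp2 : (2:ℕ) ^ (m+1) = 2 * 2 ^ m := by ring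
  apply Nat.log_eq_of_pow_le_of_lt_pow
  · rw [Nat.le_div_iff_mul_le (by norm_num)]
    omega
  · rw [Nat.div_lt_iff_lt_mul (by norm_num)]
    omega

lemma T0 : T 0 = 0 := rfl

lemma T_odd {m n : ℕ} (h1 : 7 * 2 ^ m - 6 ≤ n) (h2 : n ≤ 7 * 2 ^ m - 5) :
    T n = 2 * m + 1 := by
  have hp : 1 ≤ 2 ^ m := Nat.one_le_two_pow
  have hp2 : (2:ℕ) ^ (m+1) = 2 * 2 ^ m := by ring
  have hlog : Nat.log 2 ((n + 6) / 7) = m := Tlog h1 (by omega)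
  have hn : n ≠ 0 := by omega
  rw [T, if_neg hn, hlog, if_pos h2]

lemma T_even {m n : ℕ} (h1 : 7 * 2 ^ m - 4 ≤ n) (h2 : n ≤ 7 * 2 ^ (m + 1) - 7) :
    T n = 2 * m + 2 := by
  have hp : 1 ≤ 2 ^ m := Nat.one_le_two_pow
  have hlog : Nat.log 2 ((n + 6) / 7) = m := Tlog (by omega) h2
  have hn : n ≠ 0 := by omega
  rw [T, if_neg hn, hlog, if_neg (by omega)]

lemma T_block {n : ℕ} (hn : 1 ≤ n) :
    ∃ m, 7 * 2 ^ m - 6 ≤ n ∧ n ≤ 7 * 2 ^ (m + 1) - 7 := by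
  set m := Nat.log 2 ((n + 6) / 7) with hm
  have h1 : 2 ^ m ≤ (n + 6) / 7 := Nat.pow_log_le_self 2 (by omega)
  have h2 : (n + 6) / 7 < 2 ^ (m + 1) := Nat.lt_pow_succ_log_self (by norm_num) _
  rw [Nat.le_div_iff_mul_le (by norm_num)] at h1
  rw [Nat.div_lt_iff_lt_mul (by norm_num)] at h2
  exact ⟨m, by omega, by omega⟩

lemma T_mono : Monotone T := by
  apply monotone_nat_of_le_succ
  intro n
  rcases Nat.eq_zero_or_pos n with h | h
  · simp [h, T]
  obtain ⟨m, hm1, hm2⟩ := T_block h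
  have hp : 1 ≤ 2 ^ m := Nat.one_le_two_pow
  have hp2 : (2:ℕ) ^ (m+1) = 2 * 2 ^ m := by ring
  have hp3 : (2:ℕ) ^ (m+2) = 4 * 2 ^ m := by ring
  by_cases hc : n ≤ 7 * 2 ^ m - 5
  · have h1 : T n = 2 * m + 1 := T_odd hm1 hc
    by_cases hc2 : n + 1 ≤ 7 * 2 ^ m - 5
    · rw [h1, T_odd (by omega) hc2]
    · rw [h1, T_even (m := m) (by omega) (by omega)]; omega
  · have h1 : T n = 2 * m + 2 := T_even (by omega) hm2
    by_cases hc2 : n + 1 ≤ 7 * 2 ^ (m + 1) - 7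
    · rw [h1, T_even (m := m) (by omega) hc2]
    · rw [h1, T_odd (m := m + 1) (by omega) (by omega)]; omega

lemma optValues_congr (f g : ℕ → ℕ) (n : ℕ) (h : ∀ k < n, f k = g k) (hn : 1 ≤ n) :
    optValues f n = optValues g n := by
  unfold optValues
  by_cases h2 : n ≤ 2
  · rw [if_pos h2, if_pos h2, h 0 hn]
  · rw [if_neg h2, if_neg h2, h (n-2) (by omega), h (n-3) (by omega)]
    congr 1
    ext v
    constructor
    · rintro ⟨i, j, hi, hij, hs, rfl⟩
      exact ⟨i, j, hi, hij, hs, by rw [h i (by omega), h j (by omega)]⟩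
    · rintro ⟨i, j, hi, hij, hs, rfl⟩
      exact ⟨i, j, hi, hij, hs, by rw [h i (by omega), h j (by omega)]⟩

lemma optValues_T {n : ℕ} (hn : 3 ≤ n) :
    optValues T n = T '' Set.Icc ((n - 2) / 2) (n - 2) := by
  unfold optValues
  rw [if_neg (by omega)]
  ext v
  simp only [Set.mem_union, Set.mem_insert_iff, Set.mem_singleton_iff, Set.mem_setOf_eq,
    Set.mem_image, Set.mem_Icc]
  constructor
  · rintro ((rfl | rfl) | ⟨i, j, hi, hij, hs, rfl⟩)
    · exact ⟨n - 2, ⟨by omega, le_refl _⟩, rfl⟩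
    · exact ⟨n - 3, ⟨by omega, by omega⟩, rfl⟩
    · exact ⟨j, ⟨by omega, by omega⟩, (max_eq_right (T_mono hij)).symm⟩
  · rintro ⟨k, ⟨hk1, hk2⟩, rfl⟩
    rcases Nat.lt_or_ge k (n - 3) with hk3 | hk3
    · right
      exact ⟨n - 3 - k, k, by omega, by omega, by omega,
        (max_eq_right (T_mono (by omega : n - 3 - k ≤ k))).symm⟩
    · rcases Nat.lt_or_ge k (n - 2) with hk4 | hk4
      · left; right; congr 1; omega
      · left; left; congr 1; omega

lemma T_spec {n : ℕ} (hn : 1 ≤ n) :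
    ((∃ v ∈ optValues T n, Odd v) ∧ T n = 1 + sSup {v ∈ optValues T n | Odd v})
    ∨ ((¬ ∃ v ∈ optValues T n, Odd v) ∧ T n = 1 + sInf {v ∈ optValues T n | Even v}) := by
  by_cases h2 : n ≤ 2
  · -- base case: only option is the empty position, value 0
    right
    have hopt : optValues T n = {0} := by
      unfold optValues; rw [if_pos h2, T0]
    rw [hopt]
    constructor
    · rintro ⟨v, hv, hoddv⟩
      rw [Set.mem_singleton_iff] at hv
      subst hv
      simp [Nat.odd_iff] at hoddv
    · have : {v ∈ ({0} : Set ℕ) | Even v} = {0} := by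
        ext v
        simp only [Set.mem_sep_iff, Set.mem_singleton_iff]
        constructor
        · rintro ⟨rfl, _⟩; rfl
        · rintro rfl; exact ⟨rfl, Even.zero⟩
      rw [this, csInf_singleton, T_odd (m := 0) (by omega) (by omega)]
  · -- n ≥ 3
    push_neg at h2
    obtain ⟨m, hm1, hm2⟩ := T_block hn
    have hp : 1 ≤ 2 ^ m := Nat.one_le_two_pow
    have hp2 : (2:ℕ) ^ (m + 1) = 2 * 2 ^ m := by ring
    rw [optValues_T (by omega)]
    by_cases hc : n ≤ 7 * 2 ^ m - 5
    · -- odd block; m ≥ 1 since n ≥ 3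
      right
      obtain ⟨m', rfl⟩ : ∃ m', m = m' + 1 := by
        cases m with
        | zero => simp at hc; omega
        | succ m' => exact ⟨m', rfl⟩
      have hq : 1 ≤ 2 ^ m' := Nat.one_le_two_pow
      have hq2 : (2:ℕ) ^ (m' + 1) = 2 * 2 ^ m' := by ring
      have hclaim : ∀ v ∈ T '' Set.Icc ((n - 2) / 2) (n - 2), v = 2 * m' + 2 := by
        rintro v ⟨k, ⟨hk1, hk2⟩, rfl⟩
        exact T_even (m := m') (by omega) (by omega)
      constructor
      · rintro ⟨v, hv, hoddv⟩
        rw [hclaim v hv] at hoddv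
        obtain ⟨c, hc'⟩ := hoddv
        omega
      · have hset : {v ∈ T '' Set.Icc ((n - 2) / 2) (n - 2) | Even v} = {2 * m' + 2} := by
          ext v
          simp only [Set.mem_sep_iff, Set.mem_singleton_iff]
          constructor
          · rintro ⟨hv, _⟩; exact hclaim v hv
          · rintro rfl
            refine ⟨⟨n - 2, ⟨by omega, le_refl _⟩, T_even (m := m') (by omega) (by omega)⟩, ?_⟩
            exact ⟨m' + 1, by ring⟩
        rw [hset, csInf_singleton, T_odd (m := m' + 1) hm1 hc]
        omega
    · -- even block
      left
      have hk0mem : max ((n - 2) / 2) (7 * 2 ^ m - 6) ∈ Set.Icc ((n - 2) / 2) (n - 2) := by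
        constructor
        · exact le_max_left _ _
        · simp only [max_le_iff]; omega
      have hk0odd : T (max ((n - 2) / 2) (7 * 2 ^ m - 6)) = 2 * m + 1 :=
        T_odd (le_max_right _ _) (by simp only [max_le_iff]; omega)
      have hmem : 2 * m + 1 ∈ {v ∈ T '' Set.Icc ((n - 2) / 2) (n - 2) | Odd v} :=
        ⟨⟨_, hk0mem, hk0odd⟩, ⟨m, by ring⟩⟩
      have hub : ∀ v ∈ {v ∈ T '' Set.Icc ((n - 2) / 2) (n - 2) | Odd v}, v ≤ 2 * m + 1 := by
        rintro v ⟨⟨k, ⟨hk1, hk2⟩, rfl⟩, hoddv⟩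
        have h3 : T k ≤ T (7 * 2 ^ (m + 1) - 7) := T_mono (by omega)
        rw [T_even (m := m) (by omega) (le_refl _)] at h3
        obtain ⟨c, hc'⟩ := hoddv
        omega
      constructor
      · exact ⟨2 * m + 1, hmem.1, hmem.2⟩
      · rw [IsGreatest.csSup_eq ⟨hmem, hub⟩, T_even (m := m) (by omega) hm2]; omega

theorem suspense_misere (S : ℕ → ℕ)
    (h0 : S 0 = 0)
    (hodd : ∀ n, 1 ≤ n → (∃ v ∈ optValues S n, Odd v) →
      S n = 1 + sSup {v ∈ optValues S n | Odd v})
    (heven : ∀ n, 1 ≤ n → ¬ (∃ v ∈ optValues S n, Odd v) →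
      S n = 1 + sInf {v ∈ optValues S n | Even v}) :
    Monotone S ∧ ∀ n : ℕ,
      S (7 * 2 ^ n - 6) = 2 * n + 1 ∧ S (7 * 2 ^ n - 5) = 2 * n + 1 ∧
      (∀ k, 7 * 2 ^ n - 4 ≤ k → k ≤ 7 * 2 ^ (n + 1) - 7 → S k = 2 * n + 2) := by
  have hST : ∀ n, S n = T n := by
    intro n
    induction n using Nat.strong_induction_on with
    | _ n ih =>
      rcases Nat.eq_zero_or_pos n with h | h
      · rw [h, h0, T0]
      · have hopt : optValues S n = optValues T n :=
          optValues_congr _ _ _ (fun k hk => ih k hk) h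
        rcases T_spec h with ⟨hex, hval⟩ | ⟨hex, hval⟩
        · rw [hodd n h (hopt ▸ hex), hopt, ← hval]
        · rw [heven n h (hopt ▸ hex), hopt, ← hval]
  have hSeq : S = T := funext hST
  constructor
  · rw [hSeq]; exact T_mono
  · intro n
    have hp : 1 ≤ 2 ^ n := Nat.one_le_two_pow
    have hp2 : (2:ℕ) ^ (n + 1) = 2 * 2 ^ n := by ring
    refine ⟨?_, ?_, fun k hk1 hk2 => ?_⟩
    · rw [hST, T_odd (le_refl _) (by omega)]
    · rw [hST, T_odd (by omega) (le_refl _)]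
    · rw [hST, T_even hk1 hk2]
end
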